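/- An interval matrix [A_c − Δ, A_c + Δ], where A_c, Δ ∈ ℝ^{n×n} and Δ ≥ 0 entrywise, is regular (i.e., every real matrix A with |A − A_c| ≤ Δ entrywise is invertible) if and only if the only vector x ∈ ℝ^n satisfying |A_c x| ≤ Δ |x| componentwise is x = 0. -/

import Mathlib

lemma abs_sign_le_one' (t : ℝ) : |Real.sign t| ≤ 1 := by
  rcases lt_trichotomy t 0 with h | h | h
  · simp [Real.sign_of_neg h]
  · simp [h]
  · simp [Real.sign_of_pos h]

lemma sign_mul_self' (t : ℝ) : Real.sign t * t = |t| := by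
  rcases lt_trichotomy t 0 with h | h | h
  · rw [Real.sign_of_neg h, abs_of_neg h]; ring
  · simp [h]
  · rw [Real.sign_of_pos h, abs_of_pos h]; ring

/-- The interval matrix `[A_c - Δ, A_c + Δ]` is regular (every matrix in it is
invertible) iff the only solution of `|A_c x| ≤ Δ |x|` is `x = 0`. -/
theorem regular_iff_trivial_solution {n : ℕ} (Ac Δ : Matrix (Fin n) (Fin n) ℝ)
    (hΔ : ∀ i j, 0 ≤ Δ i j) :
    (∀ A : Matrix (Fin n) (Fin n) ℝ, (∀ i j, |A i j - Ac i j| ≤ Δ i j) → IsUnit A) ↔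
      (∀ x : Fin n → ℝ,
        (∀ i, |Ac.mulVec x i| ≤ Δ.mulVec (fun j => |x j|) i) → x = 0) := by
  constructor
  · intro hReg x hx
    by_contra hx0
    set s : Fin n → ℝ := fun i => Δ.mulVec (fun j => |x j|) i with hs
    have hs0 : ∀ i, 0 ≤ s i := by
      intro i
      simp only [hs, Matrix.mulVec, dotProduct]
      exact Finset.sum_nonneg fun j _ => mul_nonneg (hΔ i j) (abs_nonneg _)
    set d : Fin n → ℝ := fun i => if s i = 0 then 0 else Ac.mulVec x i / s i with hd
    have hdle : ∀ i, |d i| ≤ 1 := by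
      intro i
      by_cases h : s i = 0
      · simp [hd, h]
      · have hpos : 0 < s i := lt_of_le_of_ne (hs0 i) (Ne.symm h)
        simp only [hd, h, if_false, abs_div, abs_of_pos hpos]
        rw [div_le_one hpos]
        exact hx i
    set A : Matrix (Fin n) (Fin n) ℝ :=
      Matrix.of (fun i j => Ac i j - d i * Δ i j * Real.sign (x j)) with hA
    have hmem : ∀ i j, |A i j - Ac i j| ≤ Δ i j := by
      intro i j
      have h1 : A i j - Ac i j = -(d i * Δ i j * Real.sign (x j)) := by
        simp only [hA, Matrix.of_apply]; ring
      rw [h1, abs_neg, abs_mul, abs_mul, abs_of_nonneg (hΔ i j)]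
      calc |d i| * Δ i j * |Real.sign (x j)| ≤ 1 * Δ i j * 1 := by
            apply mul_le_mul (mul_le_mul_of_nonneg_right (hdle i) (hΔ i j))
              (abs_sign_le_one' _) (abs_nonneg _)
            simpa using hΔ i j
        _ = Δ i j := by ring
    have hAx : A.mulVec x = 0 := by
      funext i
      have hexp : A.mulVec x i = Ac.mulVec x i - d i * s i := by
        simp only [hA, hs, Matrix.mulVec, dotProduct, Matrix.of_apply,
          sub_mul, Finset.sum_sub_distrib, Finset.mul_sum]
        congr 1
        apply Finset.sum_congr rfl
        intro j _
        rw [← sign_mul_self' (x j)]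
        ring
      rw [Pi.zero_apply, hexp]
      by_cases h : s i = 0
      · have h2 : |Ac.mulVec x i| ≤ 0 := by rw [← h]; exact hx i
        have h3 : Ac.mulVec x i = 0 := abs_nonpos_iff.mp h2
        simp [hd, h, h3]
      · simp only [hd, h, if_false]
        field_simp
        ring
    have hunit : IsUnit A := hReg A hmem
    have hdet : A.det = 0 := Matrix.exists_mulVec_eq_zero_iff.mp ⟨x, hx0, hAx⟩
    have := (Matrix.isUnit_iff_isUnit_det A).mp hunit
    rw [hdet] at this
    exact not_isUnit_zero this
  · intro htriv A hA
    by_contra hU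
    have hdet : A.det = 0 := by
      by_contra hd
      exact hU ((Matrix.isUnit_iff_isUnit_det A).mpr (isUnit_iff_ne_zero.mpr hd))
    obtain ⟨v, hv0, hAv⟩ := Matrix.exists_mulVec_eq_zero_iff.mpr hdet
    apply hv0
    apply htriv v
    intro i
    have h0 : A.mulVec v i = 0 := by rw [hAv]; rfl
    have heq : Ac.mulVec v i = ∑ j, (Ac i j - A i j) * v j := by
      simp only [sub_mul, Finset.sum_sub_distrib]
      have : ∑ j, A i j * v j = A.mulVec v i := rfl
      rw [this, h0, sub_zero]
      rfl
    rw [heq]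
    calc |∑ j, (Ac i j - A i j) * v j| ≤ ∑ j, |(Ac i j - A i j) * v j| :=
          Finset.abs_sum_le_sum_abs _ _
      _ ≤ ∑ j, Δ i j * |v j| := by
          apply Finset.sum_le_sum
          intro j _
          rw [abs_mul]
          exact mul_le_mul_of_nonneg_right (abs_sub_comm (Ac i j) (A i j) ▸ hA i j)
            (abs_nonneg _)
      _ = Δ.mulVec (fun j => |v j|) i := rfl
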